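/- Let G be a group and let φ : P → Q be a ℤ[G]-module homomorphism between finitely generated ℤ[G]-modules. Let ‖·‖_P and ‖·‖_Q be filling norms on P and Q, induced by surjections onto P and Q from based finitely generated free ℤ[G]-modules. If P is a projective ℤ[G]-module, then there exists a constant C > 0 such that ‖φ(p)‖_Q ≤ C·‖p‖_P for all p ∈ P. -/

import Mathlib

/-- The ℓ1-norm on the based finitely generated free `ℤ[G]`-module `Fin r →₀ ℤ[G]`,
induced by the free `ℤ`-basis `{g • eᵢ}`: `‖x‖₁ = ∑_{i,g} |x_{i,g}|`. -/
noncomputable def l1 {G : Type*} [Group G] {r : ℕ}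
    (x : Fin r →₀ MonoidAlgebra ℤ G) : ℕ :=
  x.sum fun _ a => Finsupp.sum a.coeff fun _ z => z.natAbs

/-- The filling norm on `M` induced by a surjection `η` from a based finitely
generated free `ℤ[G]`-module: `‖m‖_η = min { ‖x‖₁ : η x = m }`. -/
noncomputable def fillNorm {G : Type*} [Group G] {r : ℕ}
    {M : Type*} [AddCommGroup M] [Module (MonoidAlgebra ℤ G) M]
    (η : (Fin r →₀ MonoidAlgebra ℤ G) →ₗ[MonoidAlgebra ℤ G] M) (m : M) : ℕ :=
  sInf {n : ℕ | ∃ x, η x = m ∧ l1 x = n}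

section Aux

variable {α M : Type*} [AddCommMonoid M]

/-- Generic: a subadditive `ℕ`-valued function summed over a finsupp is subadditive. -/
lemma finsuppSum_add_le (h : M → ℕ) (h0 : h 0 = 0)
    (hadd : ∀ x y : M, h (x + y) ≤ h x + h y) (f g : α →₀ M) :
    (f + g).sum (fun _ => h) ≤ f.sum (fun _ => h) + g.sum (fun _ => h) := by
  classical
  set s := f.support ∪ g.support with hs
  have hf : f.sum (fun _ => h) = ∑ i ∈ s, h (f i) :=
    Finsupp.sum_of_support_subset _ Finset.subset_union_left _ (fun i _ => h0)
  have hg : g.sum (fun _ => h) = ∑ i ∈ s, h (g i) :=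
    Finsupp.sum_of_support_subset _ Finset.subset_union_right _ (fun i _ => h0)
  have hfg : (f + g).sum (fun _ => h) = ∑ i ∈ s, h ((f + g) i) :=
    Finsupp.sum_of_support_subset _ Finsupp.support_add _ (fun i _ => h0)
  rw [hf, hg, hfg, ← Finset.sum_add_distrib]
  exact Finset.sum_le_sum fun i _ => by
    simpa using hadd (f i) (g i)

/-- Generic: sum over `single i c + f` with `f i = 0` splits exactly. -/
lemma finsuppSum_single_add (h : M → ℕ) (h0 : h 0 = 0)
    (i : α) (c : M) (f : α →₀ M) (hfi : f i = 0) :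
    (Finsupp.single i c + f).sum (fun _ => h) = h c + f.sum (fun _ => h) := by
  classical
  have hi : i ∉ f.support := by simp [Finsupp.notMem_support_iff, hfi]
  have hsub : (Finsupp.single i c + f).support ⊆ insert i f.support := by
    refine Finsupp.support_add.trans ?_
    intro j hj
    rcases Finset.mem_union.1 hj with hj | hj
    · exact Finset.mem_insert.2 (Or.inl (by
        simpa using Finsupp.support_single_subset hj))
    · exact Finset.mem_insert.2 (Or.inr hj)
  rw [Finsupp.sum_of_support_subset _ hsub _ (fun j _ => h0), Finset.sum_insert hi]
  congr 1
  · simp [hfi]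
  · refine Finset.sum_congr rfl fun j hj => ?_
    have hji : j ≠ i := fun e => hi (e ▸ hj)
    simp [Finsupp.single_eq_of_ne hji]

lemma finsuppSum_zsmul_le {M : Type*} [AddCommGroup M] [Module ℤ M]
    (h : M → ℕ) (h0 : h 0 = 0)
    (hs : ∀ (z : ℤ) (x : M), h (z • x) ≤ z.natAbs * h x) (z : ℤ) (f : α →₀ M) :
    (z • f).sum (fun _ => h) ≤ z.natAbs * f.sum (fun _ => h) := by
  classical
  rw [show (z • f).sum (fun _ => h) = ∑ i ∈ f.support, h (z • f i) from
      Finsupp.sum_of_support_subset (f.mapRange (z • ·) (zsmul_zero _)) Finsupp.support_mapRange _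
        (fun i _ => h0),
    Finsupp.sum, Finset.mul_sum]
  exact Finset.sum_le_sum fun i _ => by
    exact hs z (f i)

end Aux

section ZG

variable {G : Type*} [Group G]

/-- The ℓ1-norm on `ℤ[G]`. -/
noncomputable def n1 (a : MonoidAlgebra ℤ G) : ℕ :=
  Finsupp.sum a.coeff fun _ z => z.natAbs

lemma n1_zero : n1 (0 : MonoidAlgebra ℤ G) = 0 := by
  simp [n1]

lemma n1_add_le (x y : MonoidAlgebra ℤ G) : n1 (x + y) ≤ n1 x + n1 y :=
  finsuppSum_add_le _ rfl (fun x y => Int.natAbs_add_le x y) x.coeff y.coeff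

lemma n1_zsmul_le (z : ℤ) (x : MonoidAlgebra ℤ G) : n1 (z • x) ≤ z.natAbs * n1 x :=
  finsuppSum_zsmul_le _ rfl (fun z x => by simp [smul_eq_mul, Int.natAbs_mul]) z x.coeff

lemma single_one_mul_eq_mapDomain (g : G) (a : MonoidAlgebra ℤ G) :
    ((MonoidAlgebra.single g (1 : ℤ)) * a).coeff = Finsupp.mapDomain (fun h => g * h) a.coeff := by
  classical
  induction a using MonoidAlgebra.induction_linear with
  | zero => simp
  | add x y hx hy =>
      rw [mul_add, MonoidAlgebra.coeff_add, hx, hy, MonoidAlgebra.coeff_add, Finsupp.mapDomain_add]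
  | single h z =>
      rw [MonoidAlgebra.coeff_single, Finsupp.mapDomain_single]
      simpa using congrArg MonoidAlgebra.coeff <| MonoidAlgebra.single_mul_single (a₁ := g) (b₁ := (1:ℤ)) (a₂ := h) (b₂ := z)

lemma n1_single_one_mul (g : G) (a : MonoidAlgebra ℤ G) :
    n1 (MonoidAlgebra.single g (1 : ℤ) * a) = n1 a := by
  classical
  rw [n1, single_one_mul_eq_mapDomain]
  have hinj : Function.Injective (fun h : G => g * h) := fun x y e => by
    simpa using mul_left_cancel e
  have he := (Finsupp.embDomain_eq_mapDomain ⟨fun h => g * h, hinj⟩ a.coeff).symm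
  simp only [Function.Embedding.coeFn_mk] at he
  rw [he, Finsupp.sum_embDomain]
  rfl

variable {r : ℕ}

lemma l1_eq_sum (x : Fin r →₀ MonoidAlgebra ℤ G) :
    l1 x = x.sum fun _ a => n1 a := rfl

lemma l1_zero : l1 (0 : Fin r →₀ MonoidAlgebra ℤ G) = 0 := by simp [l1]

lemma l1_add_le (x y : Fin r →₀ MonoidAlgebra ℤ G) : l1 (x + y) ≤ l1 x + l1 y :=
  finsuppSum_add_le n1 n1_zero n1_add_le x y

lemma l1_zsmul_le (z : ℤ) (x : Fin r →₀ MonoidAlgebra ℤ G) :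
    l1 (z • x) ≤ z.natAbs * l1 x :=
  finsuppSum_zsmul_le n1 n1_zero n1_zsmul_le z x

lemma l1_single_add (i : Fin r) (c : MonoidAlgebra ℤ G)
    (f : Fin r →₀ MonoidAlgebra ℤ G) (hfi : f i = 0) :
    l1 (Finsupp.single i c + f) = n1 c + l1 f :=
  finsuppSum_single_add n1 n1_zero i c f hfi

lemma n1_single_add (g : G) (z : ℤ) (c : MonoidAlgebra ℤ G) (hcg : c.coeff g = 0) :
    n1 (MonoidAlgebra.single g z + c) = z.natAbs + n1 c :=
  finsuppSum_single_add (M := ℤ) (fun w => w.natAbs) Int.natAbs_zero g z c.coeff hcg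

lemma l1_group_smul_le (g : G) (y : Fin r →₀ MonoidAlgebra ℤ G) :
    l1 ((MonoidAlgebra.single g (1 : ℤ)) • y) ≤ l1 y := by
  classical
  rw [l1_eq_sum, Finsupp.sum_of_support_subset _ Finsupp.support_smul _
      (fun i _ => n1_zero), l1_eq_sum, Finsupp.sum]
  refine Finset.sum_le_sum fun i _ => ?_
  rw [Finsupp.smul_apply, smul_eq_mul, n1_single_one_mul]

end ZG

/-- A `ℤ[G]`-morphism from a finitely generated projective module to a finitely
generated module is bounded with respect to filling norms. -/
theorem morphism_with_projective_domain_is_bounded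
    (G : Type*) [Group G]
    (P Q : Type*) [AddCommGroup P] [Module (MonoidAlgebra ℤ G) P]
    [AddCommGroup Q] [Module (MonoidAlgebra ℤ G) Q]
    [Module.Finite (MonoidAlgebra ℤ G) P] [Module.Finite (MonoidAlgebra ℤ G) Q]
    [Module.Projective (MonoidAlgebra ℤ G) P]
    (a b : ℕ)
    (ηP : (Fin a →₀ MonoidAlgebra ℤ G) →ₗ[MonoidAlgebra ℤ G] P)
    (hηP : Function.Surjective ηP)
    (ηQ : (Fin b →₀ MonoidAlgebra ℤ G) →ₗ[MonoidAlgebra ℤ G] Q)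
    (hηQ : Function.Surjective ηQ)
    (φ : P →ₗ[MonoidAlgebra ℤ G] Q) :
    ∃ C : ℕ, 0 < C ∧ ∀ p : P, fillNorm ηQ (φ p) ≤ C * fillNorm ηP p := by
  classical
  -- lift `φ ∘ ηP` through the surjection `ηQ`, using that the free module is projective
  obtain ⟨ψ, hψ⟩ := Module.projective_lifting_property ηQ (φ.comp ηP) hηQ
  set C : ℕ := (Finset.univ.sup fun i : Fin a => l1 (ψ (Finsupp.single i 1))) + 1 with hC
  have hCpos : 0 < C := Nat.succ_pos _
  -- bound on the ℤ-basis atoms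
  have hatom : ∀ (i : Fin a) (g : G),
      l1 (ψ (Finsupp.single i (MonoidAlgebra.single g (1 : ℤ)))) ≤ C := by
    intro i g
    have h1 : Finsupp.single i (MonoidAlgebra.single g (1 : ℤ)) =
        (MonoidAlgebra.single g (1 : ℤ)) • Finsupp.single i (1 : MonoidAlgebra ℤ G) := by
      rw [Finsupp.smul_single]
      simp [smul_eq_mul]
    rw [h1, map_smul]
    refine (l1_group_smul_le g _).trans ?_
    calc l1 (ψ (Finsupp.single i 1))
        ≤ Finset.univ.sup fun i : Fin a => l1 (ψ (Finsupp.single i 1)) :=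
          Finset.le_sup (f := fun i : Fin a => l1 (ψ (Finsupp.single i 1))) (Finset.mem_univ i)
      _ ≤ C := Nat.le_succ _
  -- bound on a single column
  have hsingle : ∀ (i : Fin a) (c : MonoidAlgebra ℤ G),
      l1 (ψ (Finsupp.single i c)) ≤ C * n1 c := by
    intro i c
    induction c using MonoidAlgebra.induction with
    | zero => simp [l1_zero, n1_zero]
    | single_add g z c hg hz ih =>
      rw [Finsupp.single_add, map_add, n1_single_add g z c
        (Finsupp.notMem_support_iff.mp hg)]
      have h2 : Finsupp.single i (MonoidAlgebra.single g z) =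
          z • Finsupp.single i (MonoidAlgebra.single g (1 : ℤ)) := by
        rw [Finsupp.smul_single]
        congr 1
        rw [MonoidAlgebra.smul_single]
        simp
      have hb : l1 (ψ (Finsupp.single i (MonoidAlgebra.single g z))) ≤ z.natAbs * C := by
        rw [h2, map_zsmul]
        exact (l1_zsmul_le z _).trans (Nat.mul_le_mul_left _ (hatom i g))
      calc l1 (ψ (Finsupp.single i (MonoidAlgebra.single g z)) + ψ (Finsupp.single i c))
          ≤ l1 (ψ (Finsupp.single i (MonoidAlgebra.single g z))) + l1 (ψ (Finsupp.single i c)) :=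
            l1_add_le _ _
        _ ≤ z.natAbs * C + C * n1 c := Nat.add_le_add hb ih
        _ = C * (z.natAbs + n1 c) := by ring
  -- bound on all elements
  have hmain : ∀ x : Fin a →₀ MonoidAlgebra ℤ G, l1 (ψ x) ≤ C * l1 x := by
    intro x
    induction x using Finsupp.induction with
    | zero => simp [l1_zero]
    | single_add i c f hi hc ih =>
      rw [l1_single_add i c f (Finsupp.notMem_support_iff.mp hi), map_add]
      calc l1 (ψ (Finsupp.single i c) + ψ f)
          ≤ l1 (ψ (Finsupp.single i c)) + l1 (ψ f) := l1_add_le _ _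
        _ ≤ C * n1 c + C * l1 f := Nat.add_le_add (hsingle i c) ih
        _ = C * (n1 c + l1 f) := by ring
  refine ⟨C, hCpos, fun p => ?_⟩
  -- pick a minimal-norm representative of `p`
  have hne : {n : ℕ | ∃ x, ηP x = p ∧ l1 x = n}.Nonempty := by
    obtain ⟨x, hx⟩ := hηP p
    exact ⟨l1 x, x, hx, rfl⟩
  obtain ⟨x, hxp, hxl⟩ := Nat.sInf_mem hne
  have hηQψ : ηQ (ψ x) = φ p := by
    have := congrArg (fun f => f x) hψ
    simpa [hxp] using this
  calc fillNorm ηQ (φ p) ≤ l1 (ψ x) := Nat.sInf_le ⟨ψ x, hηQψ, rfl⟩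
    _ ≤ C * l1 x := hmain x
    _ = C * fillNorm ηP p := by rw [hxl]; rfl
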